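/- For every w = (w₁,w₂) ∈ 𝔹₂ one has ℬ(w) = m_{w₁}(ℬ((0, w₂/√(1 − |w₁|²)))), i.e. the set ℬ(w) equals the image under the Möbius map m_{w₁} of the set ℬ at the point (0, w₂/√(1 − |w₁|²)). -/

import Mathlib

open Metric Set Complex

noncomputable section

/-- `ℂⁿ` with the Euclidean norm; `𝔹ₙ` is `Metric.ball 0 1` in this space. -/
abbrev En (n : ℕ) := EuclideanSpace ℂ (Fin n)

/-- The Möbius map `m_a` interchanging `0` and `a`. -/
def mob (a z : ℂ) : ℂ := (a - z) / (1 - (starRingEnd ℂ) a * z)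

/-- A Blaschke product of degree `k`: `z ↦ η * ∏ j, m_{α j}(z)` with `|η| = 1`, `α j ∈ 𝔻`. -/
def IsBlaschke (k : ℕ) (B : ℂ → ℂ) : Prop :=
  ∃ η : ℂ, ‖η‖ = 1 ∧ ∃ α : Fin k → ℂ, (∀ j, α j ∈ ball (0 : ℂ) 1) ∧
    ∀ z : ℂ, B z = η * ∏ j, mob (α j) z

/-- The Pick problem `𝔹ₙ → 𝔻`, `z j ↦ lam j`, is extremal: it is solvable by a holomorphic
map `𝔹ₙ → 𝔻`, but by no holomorphic solution with `sup_{𝔹ₙ} |G| < 1`. -/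
def ExtremalPick {n : ℕ} {ι : Type} (z : ι → En n) (lam : ι → ℂ) : Prop :=
  (∃ F : En n → ℂ, DifferentiableOn ℂ F (ball 0 1) ∧
      MapsTo F (ball (0 : En n) 1) (ball (0 : ℂ) 1) ∧ ∀ j, F (z j) = lam j) ∧
  ¬ ∃ G : En n → ℂ, DifferentiableOn ℂ G (ball 0 1) ∧ (∀ j, G (z j) = lam j) ∧
      ∃ r : ℝ, r < 1 ∧ ∀ x ∈ ball (0 : En n) 1, ‖G x‖ ≤ r

/-- An extremal 3-point Pick problem is non-degenerate if no 2-point subproblem is extremal. -/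
def ExtremalPick3Nondeg {n : ℕ} (z : Fin 3 → En n) (lam : Fin 3 → ℂ) : Prop :=
  ExtremalPick z lam ∧
    ∀ i j : Fin 3, i ≠ j → ¬ ExtremalPick ![z i, z j] ![lam i, lam j]

/-- `ℬ(w)`: values at `w` of holomorphic maps `F : 𝔹₂ → 𝔻` with `F(z₁,0) = z₁` on `𝔻`. -/
def Bset (w : En 2) : Set ℂ :=
  {σ | ∃ F : En 2 → ℂ, DifferentiableOn ℂ F (ball 0 1) ∧
    MapsTo F (ball (0 : En 2) 1) (ball (0 : ℂ) 1) ∧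
    (∀ z₁ ∈ ball (0 : ℂ) 1, F !₂[z₁, 0] = z₁) ∧ F w = σ}

lemma normSq_key (a z : ℂ) : normSq (1 - (starRingEnd ℂ) a * z) - normSq (a - z)
    = (1 - normSq a) * (1 - normSq z) := by
  simp [Complex.normSq_apply, Complex.mul_re, Complex.mul_im]
  ring

lemma denom_ne (a z : ℂ) (h : ‖a‖ * ‖z‖ < 1) :
    1 - (starRingEnd ℂ) a * z ≠ 0 := by
  intro h0
  have h1 : (1 : ℂ) = (starRingEnd ℂ) a * z := by linear_combination h0
  have := congrArg (‖·‖) h1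
  simp [map_mul] at this
  rw [← this] at h
  simp at h

lemma denom_ne' {a z : ℂ} (ha : ‖a‖ < 1) (hz : ‖z‖ < 1) :
    1 - (starRingEnd ℂ) a * z ≠ 0 := by
  apply denom_ne
  calc ‖a‖ * ‖z‖ ≤ 1 * ‖z‖ := by
        apply mul_le_mul_of_nonneg_right ha.le (norm_nonneg z)
    _ = ‖z‖ := one_mul _
    _ < 1 := hz

lemma mob_lt_one {a z : ℂ} (ha : ‖a‖ < 1) (hz : ‖z‖ < 1) :
    ‖mob a z‖ < 1 := by
  have hd := denom_ne' ha hz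
  have hdpos : 0 < normSq (1 - (starRingEnd ℂ) a * z) := by
    simpa [Complex.normSq_pos] using hd
  have key := normSq_key a z
  have ha2 : normSq a < 1 := by rw [← Complex.sq_norm] at *; nlinarith [norm_nonneg a]
  have hz2 : normSq z < 1 := by rw [← Complex.sq_norm] at *; nlinarith [norm_nonneg z]
  have h1 : 0 < (1 - normSq a) * (1 - normSq z) := by
    apply mul_pos <;> linarith
  have h2 : normSq (mob a z) < 1 := by
    rw [mob, Complex.normSq_div, div_lt_one hdpos]
    linarith
  rw [Complex.norm_def, show (1:ℝ) = Real.sqrt 1 by simp]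
  exact Real.sqrt_lt_sqrt (normSq_nonneg _) (by simpa using h2)

lemma mob_mob {a z : ℂ} (ha : ‖a‖ < 1) (hz : ‖z‖ < 1) :
    mob a (mob a z) = z := by
  have hd := denom_ne' ha hz
  have hd2 := denom_ne' ha (mob_lt_one ha hz)
  have ha1 : (1:ℂ) - a * (starRingEnd ℂ) a ≠ 0 := by
    have := denom_ne a a (by nlinarith [norm_nonneg a])
    intro h0; apply this; linear_combination h0
  rw [mob, mob] at *
  field_simp at hd2 ⊢
  ring_nf
  field_simp [ha1]
  ring



lemma ball2_iff (z : En 2) : z ∈ ball (0 : En 2) 1 ↔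
    ‖z 0‖ ^ 2 + ‖z 1‖ ^ 2 < 1 := by
  rw [mem_ball_zero_iff, EuclideanSpace.norm_eq, Real.sqrt_lt' one_pos]
  simp [Fin.sum_univ_two]

lemma coord0_lt {z : En 2} (hz : z ∈ ball (0 : En 2) 1) : ‖z 0‖ < 1 := by
  rw [ball2_iff] at hz
  nlinarith [norm_nonneg (z 0), norm_nonneg (z 1), sq_nonneg (‖z 1‖)]

lemma coord1_lt {z : En 2} (hz : z ∈ ball (0 : En 2) 1) : ‖z 1‖ < 1 := by
  rw [ball2_iff] at hz
  nlinarith [norm_nonneg (z 0), norm_nonneg (z 1), sq_nonneg (‖z 0‖)]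

/-- Ball automorphism moving `(a,0)` to `0`. -/
def Phi (a : ℂ) (z : En 2) : En 2 :=
  !₂[mob a (z 0),
    ((Real.sqrt (1 - (‖a‖) ^ 2) : ℝ) : ℂ) * z 1 / (1 - (starRingEnd ℂ) a * z 0)]

lemma Phi_0 (a : ℂ) (z : En 2) : Phi a z 0 = mob a (z 0) := rfl
lemma Phi_1 (a : ℂ) (z : En 2) : Phi a z 1 =
    ((Real.sqrt (1 - (‖a‖) ^ 2) : ℝ) : ℂ) * z 1 / (1 - (starRingEnd ℂ) a * z 0) := rfl

lemma sq_s {a : ℂ} (ha : ‖a‖ < 1) :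
    (((Real.sqrt (1 - (‖a‖) ^ 2) : ℝ) : ℂ)) *
      ((Real.sqrt (1 - (‖a‖) ^ 2) : ℝ) : ℂ) = 1 - (starRingEnd ℂ) a * a := by
  have h1 : (0:ℝ) ≤ 1 - (‖a‖) ^ 2 := by nlinarith [norm_nonneg a]
  have h2 : Real.sqrt (1 - (‖a‖) ^ 2) * Real.sqrt (1 - (‖a‖) ^ 2)
      = 1 - (‖a‖) ^ 2 := Real.mul_self_sqrt h1
  have h3 : ((starRingEnd ℂ) a) * a = ((‖a‖ : ℝ) : ℂ) ^ 2 := by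
    rw [mul_comm, Complex.mul_conj, Complex.normSq_eq_norm_sq]
    push_cast; ring
  rw [h3, ← Complex.ofReal_mul, h2]
  push_cast; ring

lemma s_pos {a : ℂ} (ha : ‖a‖ < 1) : 0 < Real.sqrt (1 - (‖a‖) ^ 2) := by
  apply Real.sqrt_pos.2
  nlinarith [norm_nonneg a]

lemma Phi_maps {a : ℂ} (ha : ‖a‖ < 1) :
    MapsTo (Phi a) (ball (0 : En 2) 1) (ball (0 : En 2) 1) := by
  intro z hz
  have h0 := coord0_lt hz
  have h1 := coord1_lt hz
  have hd := denom_ne' ha h0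
  have hdpos : 0 < normSq (1 - (starRingEnd ℂ) a * z 0) := by
    simpa [Complex.normSq_pos] using hd
  rw [ball2_iff] at hz ⊢
  rw [Phi_0, Phi_1, Complex.sq_norm, Complex.sq_norm, mob, Complex.normSq_div,
    Complex.normSq_div]
  rw [← add_div, div_lt_one hdpos]
  have key := normSq_key a (z 0)
  have hs : normSq (((Real.sqrt (1 - (‖a‖) ^ 2) : ℝ) : ℂ)) = 1 - normSq a := by
    rw [Complex.normSq_ofReal, Real.mul_self_sqrt (by nlinarith [norm_nonneg a]),
      ← Complex.sq_norm]
  have ha2 : normSq a < 1 := by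
    rw [← Complex.sq_norm]; nlinarith [norm_nonneg a]
  have hz2 : normSq (z 0) + normSq (z 1) < 1 := by
    rw [← Complex.sq_norm, ← Complex.sq_norm]; linarith
  rw [Complex.normSq_mul, hs]
  nlinarith [normSq_nonneg (z 0), normSq_nonneg (z 1)]

lemma Phi_Phi {a : ℂ} (ha : ‖a‖ < 1) {z : En 2} (hz : z ∈ ball (0 : En 2) 1) :
    Phi a (Phi a z) = z := by
  have h0 := coord0_lt hz
  have hd := denom_ne' ha h0
  have hd2 := denom_ne' ha (mob_lt_one ha h0)
  have hs2 := sq_s ha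
  have hsne : (((Real.sqrt (1 - (‖a‖) ^ 2) : ℝ) : ℂ)) ≠ 0 := by
    simpa using (s_pos ha).ne'
  ext i
  fin_cases i
  · show Phi a (Phi a z) 0 = z 0
    rw [Phi_0, Phi_0, mob_mob ha h0]
  · show Phi a (Phi a z) 1 = z 1
    rw [Phi_1, Phi_1, Phi_0]
    rw [mob] at hd2 ⊢
    have han : (1:ℂ) - (starRingEnd ℂ) a * a ≠ 0 := by
      have := denom_ne a a (by nlinarith [norm_nonneg a])
      exact this
    field_simp [han]
    rw [show (1:ℂ) - (starRingEnd ℂ) a * z 0 - (starRingEnd ℂ) a * (a - z 0)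
        = 1 - (starRingEnd ℂ) a * a by ring, ← hs2]
    field_simp



lemma proj_dwa (i : Fin 2) (s : Set (En 2)) (x : En 2) :
    DifferentiableWithinAt ℂ (fun z : En 2 => z i) s x :=
  ((EuclideanSpace.proj i : En 2 →L[ℂ] ℂ).differentiable.differentiableAt).differentiableWithinAt

lemma frac1_dwa (a : ℂ) (s : Set (En 2)) (x : En 2) (hne : 1 - (starRingEnd ℂ) a * x 0 ≠ 0) :
    DifferentiableWithinAt ℂ (fun z : En 2 => (a - z 0) / (1 - (starRingEnd ℂ) a * z 0)) s x := by
  simp only [div_eq_mul_inv]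
  exact ((differentiableWithinAt_const a).sub (proj_dwa 0 s x)).mul
    (((differentiableWithinAt_const 1).sub ((proj_dwa 0 s x).const_mul _)).inv hne)

lemma frac2_dwa (a c : ℂ) (s : Set (En 2)) (x : En 2) (hne : 1 - (starRingEnd ℂ) a * x 0 ≠ 0) :
    DifferentiableWithinAt ℂ (fun z : En 2 => c * z 1 / (1 - (starRingEnd ℂ) a * z 0)) s x := by
  simp only [div_eq_mul_inv]
  exact ((proj_dwa 1 s x).const_mul _).mul
    (((differentiableWithinAt_const 1).sub ((proj_dwa 0 s x).const_mul _)).inv hne)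

lemma denom_dwa (a : ℂ) (s : Set (En 2)) (x : En 2) :
    DifferentiableWithinAt ℂ (fun z : En 2 => 1 - (starRingEnd ℂ) a * z 0) s x :=
  (differentiableWithinAt_const 1).sub ((proj_dwa 0 s x).const_mul _)

lemma num1_dwa (a : ℂ) (s : Set (En 2)) (x : En 2) :
    DifferentiableWithinAt ℂ (fun z : En 2 => a - z 0) s x :=
  (differentiableWithinAt_const a).sub (proj_dwa 0 s x)

lemma num2_dwa (c : ℂ) (s : Set (En 2)) (x : En 2) :
    DifferentiableWithinAt ℂ (fun z : En 2 => c * z 1) s x :=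
  (proj_dwa 1 s x).const_mul _

lemma Phi_diff {a : ℂ} (ha : ‖a‖ < 1) :
    DifferentiableOn ℂ (Phi a) (ball (0 : En 2) 1) := by
  rw [differentiableOn_piLp]
  intro i
  fin_cases i
  · intro x hx
    have hne := denom_ne' ha (coord0_lt hx)
    have h : DifferentiableWithinAt ℂ
        (fun z : En 2 => (a - z 0) / (1 - (starRingEnd ℂ) a * z 0)) (ball 0 1) x :=
      frac1_dwa a _ x hne
    exact h
  · intro x hx
    have hne := denom_ne' ha (coord0_lt hx)
    have h : DifferentiableWithinAt ℂ (fun z : En 2 =>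
        ((Real.sqrt (1 - (‖a‖) ^ 2) : ℝ) : ℂ) * z 1 / (1 - (starRingEnd ℂ) a * z 0))
        (ball 0 1) x :=
      frac2_dwa a _ _ x hne
    exact h

lemma mob_diffAt {a v : ℂ} (ha : ‖a‖ < 1) (hv : ‖v‖ < 1) :
    DifferentiableAt ℂ (mob a) v := by
  unfold mob
  exact ((differentiableAt_const a).sub differentiableAt_id).div
    ((differentiableAt_const 1).sub (differentiableAt_id.const_mul _))
    (denom_ne' ha hv)

lemma slice_mem {z₁ : ℂ} (hz : z₁ ∈ ball (0 : ℂ) 1) :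
    (!₂[z₁, 0] : En 2) ∈ ball (0 : En 2) 1 := by
  rw [ball2_iff]
  simp only [Matrix.cons_val_zero, Matrix.cons_val_one, Matrix.head_cons, map_zero, norm_zero]
  rw [mem_ball_zero_iff] at hz
  nlinarith [norm_nonneg z₁]

lemma Phi_slice (a z₁ : ℂ) : Phi a !₂[z₁, 0] = !₂[mob a z₁, 0] := by
  ext i
  fin_cases i
  · rfl
  · show Phi a !₂[z₁, 0] 1 = 0
    simp [Phi]

/-- Key transform: `mob a ∘ F ∘ Phi a` preserves the problem class. -/
lemma transform {a : ℂ} (ha : ‖a‖ < 1) {F : En 2 → ℂ}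
    (hdF : DifferentiableOn ℂ F (ball 0 1))
    (hmF : MapsTo F (ball (0 : En 2) 1) (ball (0 : ℂ) 1))
    (hsF : ∀ z₁ ∈ ball (0 : ℂ) 1, F !₂[z₁, 0] = z₁) :
    DifferentiableOn ℂ (fun z => mob a (F (Phi a z))) (ball 0 1) ∧
    MapsTo (fun z => mob a (F (Phi a z))) (ball (0 : En 2) 1) (ball (0 : ℂ) 1) ∧
    (∀ z₁ ∈ ball (0 : ℂ) 1, mob a (F (Phi a !₂[z₁, 0])) = z₁) := by
  refine ⟨?_, ?_, ?_⟩
  · intro x hx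
    have hx' : Phi a x ∈ ball (0 : En 2) 1 := Phi_maps ha hx
    have h1 : DifferentiableWithinAt ℂ (Phi a) (ball 0 1) x := Phi_diff ha x hx
    have h2 : DifferentiableWithinAt ℂ F (ball 0 1) (Phi a x) := hdF _ hx'
    have hFv : ‖F (Phi a x)‖ < 1 := by
      have := hmF hx'; rwa [mem_ball_zero_iff] at this
    exact (mob_diffAt ha hFv).comp_differentiableWithinAt x
      (h2.comp x h1 (Phi_maps ha))
  · intro x hx
    have hx' : Phi a x ∈ ball (0 : En 2) 1 := Phi_maps ha hx
    have hFv : ‖F (Phi a x)‖ < 1 := by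
      have := hmF hx'; rwa [mem_ball_zero_iff] at this
    rw [mem_ball_zero_iff]
    exact mob_lt_one ha hFv
  · intro z₁ hz₁
    have hz₁' : ‖z₁‖ < 1 := by rwa [mem_ball_zero_iff] at hz₁
    rw [Phi_slice, hsF (mob a z₁)
      (by rw [mem_ball_zero_iff]; exact mob_lt_one ha hz₁'),
      mob_mob ha hz₁']


/-- `ℬ(w) = m_{w₁}(ℬ(0, w₂/√(1 − |w₁|²)))`. -/
theorem stmt_6 (w : En 2) (hw : w ∈ ball (0 : En 2) 1) :
    Bset w = mob (w 0) ''
      Bset !₂[0, w 1 / ((Real.sqrt (1 - ‖w 0‖ ^ 2) : ℝ) : ℂ)] := by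
  have ha : ‖w 0‖ < 1 := coord0_lt hw
  set w' : En 2 := !₂[0, w 1 / ((Real.sqrt (1 - (‖w 0‖) ^ 2) : ℝ) : ℂ)] with hw'def
  have hspos := s_pos ha
  have hsne : (((Real.sqrt (1 - (‖w 0‖) ^ 2) : ℝ) : ℂ)) ≠ 0 := by
    simpa using hspos.ne'
  have hball := (ball2_iff w).1 hw
  have hw'0 : w' 0 = 0 := rfl
  have hw'1 : w' 1 = w 1 / ((Real.sqrt (1 - (‖w 0‖) ^ 2) : ℝ) : ℂ) := rfl
  have hw' : w' ∈ ball (0 : En 2) 1 := by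
    rw [ball2_iff, hw'0, hw'1, norm_zero, norm_div]
    have habs : ‖((Real.sqrt (1 - (‖w 0‖) ^ 2) : ℝ) : ℂ)‖
        = Real.sqrt (1 - (‖w 0‖) ^ 2) := by
      rw [Complex.norm_real, Real.norm_eq_abs, abs_of_pos hspos]
    have hpos : (0:ℝ) < 1 - ‖w 0‖ ^ 2 := by nlinarith [norm_nonneg (w 0)]
    rw [habs, div_pow, Real.sq_sqrt hpos.le]
    norm_num
    rw [div_lt_one hpos]
    linarith
  have hs2 := sq_s ha
  have hPw' : Phi (w 0) w' = w := by
    ext i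
    fin_cases i
    · show Phi (w 0) w' 0 = w 0
      rw [Phi_0, hw'0, mob]
      simp
    · show Phi (w 0) w' 1 = w 1
      rw [Phi_1, hw'0, hw'1]
      field_simp
      simp
  have hPw : Phi (w 0) w = w' := by
    have h := Phi_Phi ha hw'
    rw [hPw'] at h
    exact h
  ext σ
  simp only [mem_image]
  constructor
  · rintro ⟨F, hdF, hmF, hsF, hFw⟩
    obtain ⟨hd, hm, hs⟩ := transform ha hdF hmF hsF
    have hσ : ‖σ‖ < 1 := by
      rw [← hFw]
      have := hmF hw
      rwa [mem_ball_zero_iff] at this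
    refine ⟨mob (w 0) σ, ⟨_, hd, hm, hs, ?_⟩, mob_mob ha hσ⟩
    show mob (w 0) (F (Phi (w 0) w')) = mob (w 0) σ
    rw [hPw', hFw]
  · rintro ⟨τ, ⟨G, hdG, hmG, hsG, hGw'⟩, hτ⟩
    obtain ⟨hd, hm, hs⟩ := transform ha hdG hmG hsG
    refine ⟨_, hd, hm, hs, ?_⟩
    show mob (w 0) (G (Phi (w 0) w)) = σ
    rw [hPw, hGw', hτ]
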